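/- Let 𝒜 : ℤ^n → 𝒫(ℝ^d_{≥0}) be superadditive, let B ∈ ℤ^{n×n}, v ∈ ℤ^n, W ∈ ℝ^n, and for i = 1,…,k let κⁱ be Minkowski-additive, antitone functionals with κⁱ(∅) = +∞, hᵢ ∈ ℝ^n, δᵢ ∈ ℝ. Let {z̄ʲ}_{j∈J} ⊆ ℤ^n be a finite family with 𝒜(z̄ʲ) ≠ ∅ for all j ∈ J. Suppose z̃ ∈ ℤ^n satisfies 𝒜(z̃) ≠ ∅, B z̃ = v, and κⁱ(𝒜(z̃)) + hᵢᵀ z̃ ≤ δᵢ for every i = 1,…,k, and suppose β ∈ ℤ_{≥0}^J is a decomposition with z̃ = Σ_{j∈J} β_j z̄ʲ and 𝒜(z̃) = Σ_{j∈J} β_j 𝒜(z̄ʲ) (Minkowski sum). Then β satisfies the integer linear program constraints: Σ_{j∈J} β_j (B z̄ʲ) = v and Σ_{j∈J} β_j [κⁱ(𝒜(z̄ʲ)) + hᵢᵀ z̄ʲ] ≤ δᵢ for every i, and the objective values agree: Wᵀ z̃ = Σ_{j∈J} β_j (Wᵀ z̄ʲ). -/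

import Mathlib

open Pointwise

/-- `minkSMul m S` is the `m`-fold Minkowski sum of the set `S` with itself,
with the convention `minkSMul 0 S = {0}`. -/
def minkSMul {α : Type*} [AddMonoid α] : ℕ → Set α → Set α
  | 0, _ => {0}
  | m + 1, S => S + minkSMul m S

lemma minkSMul_pos {d : ℕ} (S : Set (Fin d → ℝ)) (hS : ∀ x ∈ S, ∀ j, 0 ≤ x j) :
    ∀ m, ∀ x ∈ minkSMul m S, ∀ j, 0 ≤ x j := by
  intro m
  induction m with
  | zero => intro x hx j; simp only [minkSMul, Set.mem_singleton_iff] at hx; simp [hx]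
  | succ m ih =>
    intro x hx j
    obtain ⟨a, ha, b, hb, rfl⟩ := hx
    exact add_nonneg (hS a ha j) (ih b hb j)

lemma sum_sets_pos {d : ℕ} {J : Type} (S : J → Set (Fin d → ℝ))
    (hS : ∀ j, ∀ x ∈ S j, ∀ i, 0 ≤ x i) (s : Finset J) :
    ∀ x ∈ ∑ j ∈ s, S j, ∀ i, 0 ≤ x i := by
  induction s using Finset.cons_induction with
  | empty =>
    intro x hx i
    simp only [Finset.sum_empty, Set.mem_zero] at hx
    simp [hx]
  | cons a s ha ih =>
    intro x hx i
    rw [Finset.sum_cons] at hx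
    obtain ⟨p, hp, q, hq, rfl⟩ := hx
    exact add_nonneg (hS a p hp i) (ih q hq i)

lemma kappa_minkSMul {d : ℕ} (κ : Set (Fin d → ℝ) → WithTop ℝ)
    (hadd : ∀ S T, (∀ x ∈ S, ∀ j, 0 ≤ x j) → (∀ x ∈ T, ∀ j, 0 ≤ x j) →
      κ (S + T) = κ S + κ T)
    (h0 : κ {0} = 0)
    (S : Set (Fin d → ℝ)) (hS : ∀ x ∈ S, ∀ j, 0 ≤ x j) :
    ∀ m, κ (minkSMul m S) = m • κ S := by
  intro m
  induction m with
  | zero => simpa [minkSMul] using h0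
  | succ m ih =>
    rw [show minkSMul (m+1) S = S + minkSMul m S from rfl,
      hadd S _ hS (minkSMul_pos S hS m), ih, succ_nsmul, add_comm]

lemma kappa_sum {d : ℕ} {J : Type} (κ : Set (Fin d → ℝ) → WithTop ℝ)
    (hadd : ∀ S T, (∀ x ∈ S, ∀ j, 0 ≤ x j) → (∀ x ∈ T, ∀ j, 0 ≤ x j) →
      κ (S + T) = κ S + κ T)
    (h0 : κ {0} = 0)
    (S : J → Set (Fin d → ℝ)) (hS : ∀ j, ∀ x ∈ S j, ∀ i, 0 ≤ x i) (s : Finset J) :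
    κ (∑ j ∈ s, S j) = ∑ j ∈ s, κ (S j) := by
  induction s using Finset.cons_induction with
  | empty => rw [Finset.sum_empty, Finset.sum_empty]; exact h0
  | cons a s ha ih =>
    rw [Finset.sum_cons, Finset.sum_cons,
      hadd _ _ (hS a) (sum_sets_pos S hS s), ih]

lemma kappa_zero_of_ne_top {d : ℕ} (κ : Set (Fin d → ℝ) → WithTop ℝ)
    (hadd : ∀ S T, (∀ x ∈ S, ∀ j, 0 ≤ x j) → (∀ x ∈ T, ∀ j, 0 ≤ x j) →
      κ (S + T) = κ S + κ T) (h0 : κ {0} ≠ ⊤) : κ {0} = 0 := by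
  have := hadd {0} {0} (by simp) (by simp)
  rw [Set.singleton_add_singleton, add_zero] at this
  have h2 : (0 : WithTop ℝ) + κ {0} = κ {0} + κ {0} := by rw [zero_add]; exact this
  exact (WithTop.add_right_cancel h0 h2).symm

lemma dot_decomp {n : ℕ} {J : Type} [Fintype J] (W : Fin n → ℝ) (β : J → ℕ)
    (zbar : J → Fin n → ℤ) :
    (∑ l, W l * (((∑ j, β j • zbar j) l : ℤ) : ℝ)) =
      ∑ j, (β j : ℝ) * ∑ l, W l * (zbar j l : ℝ) := by
  simp only [Finset.sum_apply, Pi.smul_apply, nsmul_eq_mul, Pi.mul_apply, Pi.natCast_apply]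
  push_cast
  simp only [Finset.mul_sum]
  rw [Finset.sum_comm]
  exact Finset.sum_congr rfl fun j _ => Finset.sum_congr rfl fun l _ => by ring

lemma mulVec_decomp {n : ℕ} {J : Type} [Fintype J] (B : Matrix (Fin n) (Fin n) ℤ)
    (β : J → ℕ) (zbar : J → Fin n → ℤ) :
    ∑ j, β j • B.mulVec (zbar j) = B.mulVec (∑ j, β j • zbar j) := by
  funext i
  simp only [Matrix.mulVec, dotProduct, Finset.sum_apply, Pi.smul_apply,
    nsmul_eq_mul, Pi.mul_apply, Pi.natCast_apply, Finset.mul_sum]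
  rw [Finset.sum_comm]
  exact Finset.sum_congr rfl fun j _ => Finset.sum_congr rfl fun l _ => by ring

/-- Theorem (IP ↔ IMP), second direction: a feasible solution `z̃` of the (mixed-)integer
Minkowski program together with a decomposition `z̃ = Σ_j β_j z̄ʲ`,
`𝒜(z̃) = Σ_j β_j 𝒜(z̄ʲ)` gives a feasible solution `β` of the integer linear program,
with the same objective value. -/
theorem ip_of_imp_feasible
    {n d k : ℕ} {J : Type} [Fintype J]
    -- the superadditive set-valued map with values in the nonnegative orthant of ℝ^d
    (𝒜 : (Fin n → ℤ) → Set (Fin d → ℝ))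
    (hApos : ∀ z, ∀ x ∈ 𝒜 z, ∀ i, 0 ≤ x i)
    (hsuper : ∀ z₁ z₂ : Fin n → ℤ, 𝒜 z₁ + 𝒜 z₂ ⊆ 𝒜 (z₁ + z₂))
    (B : Matrix (Fin n) (Fin n) ℤ) (v : Fin n → ℤ) (W : Fin n → ℝ)
    -- the functionals κⁱ, with values in ℝ ∪ {+∞}
    (κ : Fin k → Set (Fin d → ℝ) → WithTop ℝ)
    (hκempty : ∀ i, κ i ∅ = ⊤)
    -- Minkowski-additivity on subsets of the nonnegative orthant
    (hκadd : ∀ (i : Fin k) (S T : Set (Fin d → ℝ)),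
      (∀ x ∈ S, ∀ j, 0 ≤ x j) → (∀ x ∈ T, ∀ j, 0 ≤ x j) →
      κ i (S + T) = κ i S + κ i T)
    -- antitonicity on subsets of the nonnegative orthant
    (hκanti : ∀ (i : Fin k) (S T : Set (Fin d → ℝ)),
      (∀ x ∈ S, ∀ j, 0 ≤ x j) → (∀ x ∈ T, ∀ j, 0 ≤ x j) →
      S ⊆ T → κ i T ≤ κ i S)
    (h : Fin k → Fin n → ℝ) (δ : Fin k → ℝ)
    -- the finite family {z̄ʲ} with 𝒜(z̄ʲ) ≠ ∅
    (zbar : J → Fin n → ℤ) (hzbar : ∀ j, (𝒜 (zbar j)).Nonempty)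
    -- a feasible solution z̃ of the integer Minkowski program
    (ztilde : Fin n → ℤ)
    (hne : (𝒜 ztilde).Nonempty)
    (hBz : B.mulVec ztilde = v)
    (hz : ∀ i : Fin k,
      κ i (𝒜 ztilde) + ((∑ l, h i l * (ztilde l : ℝ)) : WithTop ℝ) ≤ ((δ i : ℝ) : WithTop ℝ))
    -- the decomposition β of z̃
    (β : J → ℕ)
    (hdecz : ztilde = ∑ j, β j • zbar j)
    (hdecA : 𝒜 ztilde = ∑ j, minkSMul (β j) (𝒜 (zbar j))) :
    (∑ j, β j • B.mulVec (zbar j) = v) ∧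
    (∀ i : Fin k,
      ∑ j, β j • (κ i (𝒜 (zbar j)) + ((∑ l, h i l * (zbar j l : ℝ)) : WithTop ℝ))
        ≤ ((δ i : ℝ) : WithTop ℝ)) ∧
    (∑ l, W l * (ztilde l : ℝ)) = ∑ j, (β j : ℝ) * ∑ l, W l * (zbar j l : ℝ) := by
  refine ⟨?_, ?_, ?_⟩
  · rw [mulVec_decomp, ← hdecz, hBz]
  · intro i
    by_cases h0 : κ i {0} = ⊤
    · exfalso
      have hAeq : 𝒜 ztilde + ({0} : Set (Fin d → ℝ)) = 𝒜 ztilde := by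
        simp [Set.add_singleton]
      have htop : κ i (𝒜 ztilde) = ⊤ := by
        rw [← hAeq, hκadd i _ _ (hApos ztilde) (by simp), h0, add_top]
      have := hz i
      rw [htop, top_add] at this
      simp at this
    · have h0' : κ i {0} = 0 := kappa_zero_of_ne_top (κ i) (hκadd i) h0
      have key : κ i (𝒜 ztilde) = ∑ j, (β j) • κ i (𝒜 (zbar j)) := by
        rw [hdecA, kappa_sum (κ i) (hκadd i) h0' _
          (fun j => minkSMul_pos _ (hApos (zbar j)) (β j))]
        exact Finset.sum_congr rfl fun j _ =>
          kappa_minkSMul (κ i) (hκadd i) h0' _ (hApos (zbar j)) (β j)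
      have hc : ∀ (w : Fin n → ℝ) (zz : Fin n → ℤ),
          ((∑ l, w l * (zz l : ℝ)) : WithTop ℝ) =
            (((∑ l, w l * (zz l : ℝ)) : ℝ) : WithTop ℝ) := by
        intro w zz
        push_cast
        rfl
      have hsm : ∀ (m : ℕ) (r : ℝ), m • ((r : WithTop ℝ)) = (((m : ℝ) * r : ℝ) : WithTop ℝ) := by
        intro m r
        rw [← nsmul_eq_mul]
        exact_mod_cast rfl
      have hlin : ∑ j, β j • (((∑ l, h i l * (zbar j l : ℝ)) : ℝ) : WithTop ℝ)
          = (((∑ l, h i l * (ztilde l : ℝ)) : ℝ) : WithTop ℝ) := by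
        have hreal : ∑ j, (β j : ℝ) * ∑ l, h i l * (zbar j l : ℝ)
            = ∑ l, h i l * (ztilde l : ℝ) := by
          rw [hdecz]; exact (dot_decomp (h i) β zbar).symm
        simp only [hsm]
        exact_mod_cast hreal
      have hz' := hz i
      rw [hc (h i) ztilde] at hz'
      calc ∑ j, β j • (κ i (𝒜 (zbar j)) + ((∑ l, h i l * (zbar j l : ℝ)) : WithTop ℝ))
          = (∑ j, β j • κ i (𝒜 (zbar j)))
            + ∑ j, β j • (((∑ l, h i l * (zbar j l : ℝ)) : ℝ) : WithTop ℝ) := by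
            simp only [hc (h i), smul_add]; rw [Finset.sum_add_distrib]
        _ = κ i (𝒜 ztilde) + (((∑ l, h i l * (ztilde l : ℝ)) : ℝ) : WithTop ℝ) := by
            rw [← key, hlin]
        _ ≤ ((δ i : ℝ) : WithTop ℝ) := hz'
  · rw [hdecz]
    exact dot_decomp W β zbar
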